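/- Let q be a real number with 0 < q < 1. On the ℂ-vector space of Laurent polynomials in one variable ζ over ℂ, define the ℂ-linear operators E, F, K, K' by their action on the monomials ζ^k (k ∈ ℤ): E(ζ^k) = −q·((1 − q^{2k})/(1 − q²))·ζ^{k+1}, F(ζ^k) = ((q^{-2k} − 1)/(q^{-2} − 1))·ζ^{k−1}, K(ζ^k) = q^{-2k}·ζ^k, K'(ζ^k) = q^{2k}·ζ^k. Then the operator (1/2)(E∘F + F∘E) + ((q^{-1} + q)/(2(q^{-1} − q)²))·(K − 2·id + K') is the zero operator. -/

import Mathlib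

open LaurentPolynomial


set_option maxHeartbeats 1600000 in
private lemma casimir_scalar_id (q y : ℂ) (hq : q ≠ 0) (hy : y ≠ 0) (h1 : 1 - q^2 ≠ 0) :
    1/2 * ((y⁻¹ - 1) / ((q^2)⁻¹ - 1) * (-q * ((1 - y * (q^2)⁻¹) / (1 - q^2)))) +
    1/2 * (-q * ((1 - y) / (1 - q^2)) * ((y⁻¹ * (q^2)⁻¹ - 1) / ((q^2)⁻¹ - 1))) +
    (((q⁻¹ + q) / (2*(q⁻¹ - q)^2)) * y⁻¹ - 2 * ((q⁻¹ + q) / (2*(q⁻¹ - q)^2))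
      + ((q⁻¹ + q) / (2*(q⁻¹ - q)^2)) * y) = 0 := by
  have hp : (q ^ 2)⁻¹ - 1 = (1 - q ^ 2) / q ^ 2 := by field_simp
  have hdd' : (q⁻¹ - q) = (1 - q^2)/q := by field_simp
  rw [hp, hdd']
  have h3 : y * q ^ 2 * 2 - y * q ^ 4 * 4 + y * q ^ 6 * 2 ≠ 0 := by
    have e : y * q ^ 2 * 2 - y * q ^ 4 * 4 + y * q ^ 6 * 2 = 2 * y * q^2 * (1-q^2)^2 := by
      ring
    rw [e]
    exact mul_ne_zero (mul_ne_zero (mul_ne_zero two_ne_zero hy) (pow_ne_zero _ hq))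
      (pow_ne_zero _ h1)
  have h4 : y * q * 2 - y * q ^ 3 * 4 + y * q ^ 5 * 2 ≠ 0 := by
    have e : y * q * 2 - y * q ^ 3 * 4 + y * q ^ 5 * 2 = 2 * y * q * (1-q^2)^2 := by
      ring
    rw [e]
    exact mul_ne_zero (mul_ne_zero (mul_ne_zero two_ne_zero hy) hq) (pow_ne_zero _ h1)
  apply mul_left_cancel₀ hy
  rw [mul_zero]
  field_simp
  ring

/-- the quantum quadratic Casimir element acts as zero in the
representation of `U_q(sl(2))` on Laurent polynomials by the q-difference
operators `E`, `F`, `K`, `K' = K⁻¹`. -/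
theorem casimir_acts_trivially_on_laurent
    (q : ℝ) (hq0 : 0 < q) (hq1 : q < 1)
    (E F K K' : LaurentPolynomial ℂ →ₗ[ℂ] LaurentPolynomial ℂ)
    (hE : ∀ k : ℤ, E (T k) =
      (-(q : ℂ) * ((1 - (q : ℂ) ^ (2 * k)) / (1 - (q : ℂ) ^ 2))) • T (k + 1))
    (hF : ∀ k : ℤ, F (T k) =
      ((((q : ℂ) ^ (-(2 * k)) - 1)) / ((q : ℂ) ^ (-2 : ℤ) - 1)) • T (k - 1))
    (hK : ∀ k : ℤ, K (T k) = ((q : ℂ) ^ (-(2 * k))) • T k)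
    (hK' : ∀ k : ℤ, K' (T k) = ((q : ℂ) ^ (2 * k)) • T k) :
    (1 / 2 : ℂ) • (E ∘ₗ F + F ∘ₗ E) +
      ((((q : ℂ))⁻¹ + (q : ℂ)) / (2 * (((q : ℂ))⁻¹ - (q : ℂ)) ^ 2)) •
        (K - (2 : ℂ) • LinearMap.id + K') = 0 := by
  have hq : (q : ℂ) ≠ 0 := by
    exact_mod_cast hq0.ne'
  have hq1' : (q : ℂ) ≠ 1 := by
    exact_mod_cast hq1.ne
  have hqm1 : (q : ℂ) ≠ -1 := by
    intro h
    have : (q : ℝ) = -1 := by exact_mod_cast h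
    linarith
  have hden : 1 - (q : ℂ) ^ 2 ≠ 0 := by
    intro h
    have : ((q : ℂ) - 1) * ((q : ℂ) + 1) = 0 := by ring_nf; linear_combination -h
    rcases mul_eq_zero.mp this with h' | h'
    · exact hq1' (by linear_combination h')
    · exact hqm1 (by linear_combination h')
  have hden2 : (q : ℂ) ^ (-2 : ℤ) - 1 ≠ 0 := by
    intro h
    have h2 : (q : ℂ) ^ (-2 : ℤ) = ((q : ℂ) ^ 2)⁻¹ := by
      rw [zpow_neg, zpow_two, sq]
    have : ((q : ℂ) ^ 2)⁻¹ = 1 := by rw [← h2]; linear_combination h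
    have h3 : (q : ℂ) ^ 2 = 1 := by
      field_simp at this
      linear_combination -this
    exact hden (by linear_combination -h3)
  have hdd : (q : ℂ)⁻¹ - (q : ℂ) ≠ 0 := by
    intro h
    apply hden
    have := mul_eq_zero_of_left h (q : ℂ)
    field_simp at this
    linear_combination this
  have h0 : ∀ k : ℤ,
      (((1 / 2 : ℂ) • (E ∘ₗ F + F ∘ₗ E) +
        ((((q : ℂ))⁻¹ + (q : ℂ)) / (2 * (((q : ℂ))⁻¹ - (q : ℂ)) ^ 2)) •
          (K - (2 : ℂ) • LinearMap.id + K') :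
        LaurentPolynomial ℂ →ₗ[ℂ] LaurentPolynomial ℂ) (T k) = 0) := by
    intro k
    simp only [LinearMap.add_apply, LinearMap.smul_apply, LinearMap.comp_apply,
      LinearMap.sub_apply, LinearMap.id_apply, hE, hF, hK, hK',
      map_smul, smul_smul, sub_add_cancel, add_sub_cancel_right]
    have key : ∀ (u a b c d e : ℂ),
        u • ((a • T k : LaurentPolynomial ℂ) + b • T k)
          + c • (d • T k - (2 : ℂ) • T k + e • T k)
        = (u * a + u * b + (c * d - 2 * c + c * e)) • T k := by
      intros; module
    rw [key, smul_eq_zero]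
    left
    have e0 : (q : ℂ) ^ (2 : ℤ) = (q : ℂ) ^ 2 := by rw [zpow_two, sq]
    have e1 : (q : ℂ) ^ (2 * (k - 1)) = (q : ℂ) ^ (2 * k) * ((q : ℂ) ^ 2)⁻¹ := by
      rw [show (2 * (k - 1) : ℤ) = 2 * k - 2 by ring, zpow_sub₀ hq, e0, div_eq_mul_inv]
    have e2 : (q : ℂ) ^ (-(2 * (k + 1))) = ((q : ℂ) ^ (2 * k))⁻¹ * ((q : ℂ) ^ 2)⁻¹ := by
      rw [show (-(2 * (k + 1)) : ℤ) = -(2 * k) + -2 by ring, zpow_add₀ hq, zpow_neg,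
        zpow_neg, e0]
    have e3 : (q : ℂ) ^ (-(2 * k)) = ((q : ℂ) ^ (2 * k))⁻¹ := zpow_neg _ _
    have e4 : (q : ℂ) ^ (-2 : ℤ) = ((q : ℂ) ^ 2)⁻¹ := by rw [zpow_neg, e0]
    have hx : (q : ℂ) ^ (2 * k) ≠ 0 := zpow_ne_zero _ hq
    have hden2' : ((q : ℂ) ^ 2)⁻¹ - 1 ≠ 0 := by rw [← e4]; exact hden2
    rw [e1, e2, e3, e4]
    linear_combination casimir_scalar_id (q : ℂ) ((q : ℂ) ^ (2 * k)) hq hx hden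
  refine AddMonoidAlgebra.lhom_ext' fun k => LinearMap.ext fun b => ?_
  rw [LinearMap.comp_apply, LinearMap.comp_apply, AddMonoidAlgebra.lsingle_apply]
  have hs : (AddMonoidAlgebra.single k b : LaurentPolynomial ℂ) = b • T k := by
    rw [T, AddMonoidAlgebra.smul_single', mul_one]
  rw [hs, map_smul]
  erw [h0 k]
  simp
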